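/- Let T be an automorphism of a probability space (X, μ), let A ⊆ X be measurable, let I be a countable index set, and for each i ∈ I let B_i be the base of a Rokhlin tower of height h(i) for T whose tower X_i = ⋃_{k=0}^{h(i)−1} T^k B_i is disjoint from A, the towers X_i being pairwise disjoint. Set C = ⋃_{i∈I} X_i, fix n ≥ 1, and put f = χ_A. Then μ({x ∈ C : f_n(T, x) ≠ 0}) ≤ n · ∑_{i∈I} μ(B_i). -/

import Mathlib

open MeasureTheory Filter Set

/-- The Birkhoff (time) average `f_N(T, x) = (1/N) ∑_{i=1}^{N} f(T^i x)`. -/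
noncomputable def birkhoffAvg {X : Type*} (T : X → X) (f : X → ℝ) (N : ℕ) (x : X) : ℝ :=
  (N : ℝ)⁻¹ * ∑ i ∈ Finset.Icc 1 N, f (T^[i] x)

/-- On a disjoint union `C` of Rokhlin towers disjoint from `A`, the Birkhoff average
`f_n(T, ·)` of `f = χ_A` is nonzero only on a set of measure at most `n · ∑ᵢ μ(Bᵢ)`. -/
theorem measure_birkhoff_ne_zero_on_towers_le
    {X : Type*} [MeasurableSpace X] (μ : Measure X) [IsProbabilityMeasure μ]
    (T : X ≃ᵐ X) (hT : MeasurePreserving T μ μ)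
    (A : Set X) (hA : MeasurableSet A)
    {I : Type*} [Countable I] (B : I → Set X) (hB : ∀ i, MeasurableSet (B i))
    (hBpos : ∀ i, 0 < μ (B i)) (h : I → ℕ)
    (htower : ∀ i, ∀ k l, k < h i → l < h i → k ≠ l →
      Disjoint ((⇑T)^[k] '' B i) ((⇑T)^[l] '' B i))
    (hdisjA : ∀ i, Disjoint (⋃ k ∈ Finset.range (h i), (⇑T)^[k] '' B i) A)
    (htowersdisj : ∀ i j, i ≠ j →
      Disjoint (⋃ k ∈ Finset.range (h i), (⇑T)^[k] '' B i)
        (⋃ k ∈ Finset.range (h j), (⇑T)^[k] '' B j))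
    (n : ℕ) (hn : 1 ≤ n) :
    μ {x ∈ ⋃ i, ⋃ k ∈ Finset.range (h i), (⇑T)^[k] '' B i |
        birkhoffAvg T (A.indicator (fun _ => (1 : ℝ))) n x ≠ 0}
      ≤ n * ∑' i, μ (B i) := by
  -- measure of each level equals measure of the base
  have hmeas : ∀ (k : ℕ) (i : I), μ ((⇑T)^[k] '' B i) = μ (B i) := by
    intro k i
    have himg : (⇑T)^[k] '' B i = ((⇑T.symm)^[k]) ⁻¹' (B i) :=
      congrFun (Set.image_eq_preimage_of_inverse
        (Function.LeftInverse.iterate T.symm_apply_apply k)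
        (Function.LeftInverse.iterate T.apply_symm_apply k)) (B i)
    rw [himg]
    exact ((MeasurePreserving.symm T hT).iterate k).measure_preimage
      (hB i).nullMeasurableSet
  -- the bad set is contained in the top n levels of each tower
  have hsub : {x ∈ ⋃ i, ⋃ k ∈ Finset.range (h i), (⇑T)^[k] '' B i |
        birkhoffAvg T (A.indicator (fun _ => (1 : ℝ))) n x ≠ 0}
      ⊆ ⋃ i, ⋃ k ∈ Finset.Ico (h i - n) (h i), (⇑T)^[k] '' B i := by
    rintro x ⟨hxC, hxne⟩
    simp only [Set.mem_iUnion] at hxC ⊢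
    obtain ⟨i, k, hk, hx⟩ := hxC
    rw [Finset.mem_range] at hk
    refine ⟨i, k, ?_, hx⟩
    rw [Finset.mem_Ico]
    refine ⟨?_, hk⟩
    -- need : h i - n ≤ k, i.e. h i ≤ k + n
    by_contra hcon
    push_neg at hcon
    have hkn : k + n < h i := by omega
    -- from birkhoffAvg ≠ 0, some T^[j] x ∈ A with 1 ≤ j ≤ n
    have hsum : ∑ j ∈ Finset.Icc 1 n,
        (A.indicator (fun _ => (1 : ℝ))) ((⇑T)^[j] x) ≠ 0 := by
      intro h0
      apply hxne
      unfold birkhoffAvg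
      rw [h0, mul_zero]
    obtain ⟨j, hj, hjne⟩ := Finset.exists_ne_zero_of_sum_ne_zero hsum
    rw [Finset.mem_Icc] at hj
    have hjA : (⇑T)^[j] x ∈ A := by
      by_contra hnA
      exact hjne (Set.indicator_of_notMem hnA _)
    -- but T^[j] x is still in the tower i
    obtain ⟨b, hb, rfl⟩ := hx
    have : (⇑T)^[j] ((⇑T)^[k] b) = (⇑T)^[j + k] b :=
      (Function.iterate_add_apply _ j k b).symm
    have hmem : (⇑T)^[j] ((⇑T)^[k] b) ∈
        ⋃ l ∈ Finset.range (h i), (⇑T)^[l] '' B i := by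
      rw [this]
      simp only [Set.mem_iUnion]
      exact ⟨j + k, Finset.mem_range.2 (by omega), ⟨b, hb, rfl⟩⟩
    exact Set.disjoint_left.1 (hdisjA i) hmem hjA
  calc μ {x ∈ ⋃ i, ⋃ k ∈ Finset.range (h i), (⇑T)^[k] '' B i |
        birkhoffAvg T (A.indicator (fun _ => (1 : ℝ))) n x ≠ 0}
      ≤ μ (⋃ i, ⋃ k ∈ Finset.Ico (h i - n) (h i), (⇑T)^[k] '' B i) :=
        measure_mono hsub
    _ ≤ ∑' i, μ (⋃ k ∈ Finset.Ico (h i - n) (h i), (⇑T)^[k] '' B i) :=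
        measure_iUnion_le _
    _ ≤ ∑' i, (n : ENNReal) * μ (B i) := by
        refine ENNReal.tsum_le_tsum fun i => ?_
        calc μ (⋃ k ∈ Finset.Ico (h i - n) (h i), (⇑T)^[k] '' B i)
            ≤ ∑ k ∈ Finset.Ico (h i - n) (h i), μ ((⇑T)^[k] '' B i) :=
              measure_biUnion_finset_le _ _
          _ = ∑ k ∈ Finset.Ico (h i - n) (h i), μ (B i) := by
              exact Finset.sum_congr rfl fun k _ => hmeas k i
          _ = ((Finset.Ico (h i - n) (h i)).card : ENNReal) * μ (B i) := by
              rw [Finset.sum_const, nsmul_eq_mul]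
          _ ≤ (n : ENNReal) * μ (B i) := by
              apply mul_le_mul_left _
              rw [Nat.card_Ico]
              exact Nat.cast_le.mpr (by omega)
    _ = n * ∑' i, μ (B i) := ENNReal.tsum_mul_left
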